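/- Under the stated assumptions, the third moment of the autoregressive coefficient is identified from the first four autocorrelations of first differences: E(φ³) = (1 + 2ρ₁ + 2ρ₂ + 2ρ₃ + ρ₄)/(1 + ρ₁). -/

import Mathlib

open MeasureTheory

/-- The third moment of the autoregressive coefficient is identified from the first four
autocorrelations of first differences: `E(φ³) = (1 + 2ρ₁ + 2ρ₂ + 2ρ₃ + ρ₄)/(1 + ρ₁)`. -/
theorem third_moment_identified
    {Ω : Type*} [MeasurableSpace Ω] (P : Measure Ω) [IsProbabilityMeasure P]
    (φ : Ω → ℝ) (hφm : Measurable φ) (ε₀ : ℝ) (hε₀ : 0 < ε₀)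
    (hφbd : ∀ᵐ ω ∂P, -1 + ε₀ ≤ φ ω ∧ φ ω ≤ 1)
    (ρ : ℕ → ℝ)
    (hρ : ∀ h : ℕ, 1 ≤ h → ρ h =
      -(∫ ω, ((1 - φ ω) / (1 + φ ω)) * φ ω ^ (h - 1) ∂P) /
        (2 * ∫ ω, 1 / (1 + φ ω) ∂P)) :
    ∫ ω, (φ ω) ^ 3 ∂P = (1 + 2 * ρ 1 + 2 * ρ 2 + 2 * ρ 3 + ρ 4) / (1 + ρ 1) := by
  have hpos : ∀ᵐ ω ∂P, ε₀ ≤ 1 + φ ω ∧ 1 + φ ω ≤ 2 ∧ |φ ω| ≤ 1 := by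
    filter_upwards [hφbd] with ω ⟨h1, h2⟩
    refine ⟨by linarith, by linarith, abs_le.2 ⟨by linarith, h2⟩⟩
  -- integrability
  have hintD : Integrable (fun ω => 1 / (1 + φ ω)) P := by
    refine (integrable_const (1 / ε₀)).mono'
      ((measurable_const.div (measurable_const.add hφm)).aestronglyMeasurable) ?_
    filter_upwards [hpos] with ω ⟨h1, h2, h3⟩
    have hne : (0:ℝ) < 1 + φ ω := lt_of_lt_of_le hε₀ h1
    rw [Real.norm_eq_abs, abs_of_pos (div_pos one_pos hne)]
    exact div_le_div_of_nonneg_left one_pos.le hε₀ h1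
  have hintJ : ∀ k : ℕ, Integrable (fun ω => ((1 - φ ω) / (1 + φ ω)) * φ ω ^ k) P := by
    intro k
    refine (integrable_const (2 / ε₀)).mono'
      (((measurable_const.sub hφm).div (measurable_const.add hφm)).mul
        (hφm.pow measurable_const)).aestronglyMeasurable ?_
    filter_upwards [hpos] with ω ⟨h1, h2, h3⟩
    have hne : (0:ℝ) < 1 + φ ω := lt_of_lt_of_le hε₀ h1
    have habs1 : |1 - φ ω| ≤ 2 := by
      rw [abs_le] at h3 ⊢; constructor <;> linarith [h3.1, h3.2]
    have habs2 : |φ ω ^ k| ≤ 1 := by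
      rw [abs_pow]; exact pow_le_one₀ (abs_nonneg _) h3
    calc |(1 - φ ω) / (1 + φ ω) * φ ω ^ k|
        = |1 - φ ω| / |1 + φ ω| * |φ ω ^ k| := by rw [abs_mul, abs_div]
      _ ≤ 2 / ε₀ * 1 := by
          refine mul_le_mul ?_ habs2 (abs_nonneg _) (by positivity)
          rw [abs_of_pos hne]
          exact div_le_div₀ (by norm_num) habs1 hε₀ h1
      _ = 2 / ε₀ := mul_one _
  -- notation
  set D : ℝ := ∫ ω, 1 / (1 + φ ω) ∂P with hD
  set J : ℕ → ℝ := fun k => ∫ ω, ((1 - φ ω) / (1 + φ ω)) * φ ω ^ k ∂P with hJ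
  -- D ≥ 1/2
  have hDhalf : (1:ℝ)/2 ≤ D := by
    rw [hD]
    rw [show (1:ℝ)/2 = ∫ _ω, (1:ℝ)/2 ∂P by simp]
    refine integral_mono_ae (integrable_const _) hintD ?_
    filter_upwards [hpos] with ω ⟨h1, h2, h3⟩
    have hne : (0:ℝ) < 1 + φ ω := lt_of_lt_of_le hε₀ h1
    rw [div_le_div_iff₀ (by norm_num) hne]
    linarith
  have hDne : (2:ℝ) * D ≠ 0 := by positivity
  -- key identity: J 0 = 2 D - 1
  have hJ0 : J 0 = 2 * D - 1 := by
    have : J 0 = ∫ ω, (2 * (1 / (1 + φ ω)) - 1) ∂P := by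
      rw [hJ]
      refine integral_congr_ae ?_
      filter_upwards [hpos] with ω ⟨h1, h2, h3⟩
      have hne : (1:ℝ) + φ ω ≠ 0 := (lt_of_lt_of_le hε₀ h1).ne'
      field_simp
      ring
    rw [this, integral_sub (hintD.const_mul 2) (integrable_const 1),
      integral_const_mul]
    simp [hD]
  -- key identity: ∫ φ³ = 2 D - 2 J 0 - 2 J 1 - 2 J 2 - J 3
  have hM : ∫ ω, (φ ω) ^ 3 ∂P = 2 * D - 2 * J 0 - 2 * J 1 - 2 * J 2 - J 3 := by
    have i1 : Integrable (fun ω => 2 * (1 / (1 + φ ω))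
        - 2 * (((1 - φ ω) / (1 + φ ω)) * φ ω ^ 0)) P :=
      (hintD.const_mul 2).sub ((hintJ 0).const_mul 2)
    have i2 : Integrable (fun ω => 2 * (1 / (1 + φ ω))
        - 2 * (((1 - φ ω) / (1 + φ ω)) * φ ω ^ 0)
        - 2 * (((1 - φ ω) / (1 + φ ω)) * φ ω ^ 1)) P :=
      i1.sub ((hintJ 1).const_mul 2)
    have i3 : Integrable (fun ω => 2 * (1 / (1 + φ ω))
        - 2 * (((1 - φ ω) / (1 + φ ω)) * φ ω ^ 0)
        - 2 * (((1 - φ ω) / (1 + φ ω)) * φ ω ^ 1)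
        - 2 * (((1 - φ ω) / (1 + φ ω)) * φ ω ^ 2)) P :=
      i2.sub ((hintJ 2).const_mul 2)
    have hptw : ∫ ω, (φ ω) ^ 3 ∂P =
        ∫ ω, (2 * (1 / (1 + φ ω)) - 2 * (((1 - φ ω) / (1 + φ ω)) * φ ω ^ 0)
          - 2 * (((1 - φ ω) / (1 + φ ω)) * φ ω ^ 1)
          - 2 * (((1 - φ ω) / (1 + φ ω)) * φ ω ^ 2)
          - (((1 - φ ω) / (1 + φ ω)) * φ ω ^ 3)) ∂P := by
      refine integral_congr_ae ?_
      filter_upwards [hpos] with ω ⟨h1, h2, h3⟩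
      have hne : (1:ℝ) + φ ω ≠ 0 := (lt_of_lt_of_le hε₀ h1).ne'
      field_simp
      ring
    rw [hptw, integral_sub i3 (hintJ 3), integral_sub i2 ((hintJ 2).const_mul 2),
      integral_sub i1 ((hintJ 1).const_mul 2),
      integral_sub (hintD.const_mul 2) ((hintJ 0).const_mul 2)]
    simp only [integral_const_mul]
    rfl
  -- rewrite ρ
  have hρ1 := hρ 1 le_rfl
  have hρ2 := hρ 2 (by norm_num)
  have hρ3 := hρ 3 (by norm_num)
  have hρ4 := hρ 4 (by norm_num)
  simp only [show (1:ℕ) - 1 = 0 from rfl, show (2:ℕ) - 1 = 1 from rfl,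
    show (3:ℕ) - 1 = 2 from rfl, show (4:ℕ) - 1 = 3 from rfl] at hρ1 hρ2 hρ3 hρ4
  rw [hM, hρ1, hρ2, hρ3, hρ4]
  rw [show -(∫ ω, (1 - φ ω) / (1 + φ ω) * φ ω ^ 0 ∂P) = -(J 0) from rfl,
    show -(∫ ω, (1 - φ ω) / (1 + φ ω) * φ ω ^ 1 ∂P) = -(J 1) from rfl,
    show -(∫ ω, (1 - φ ω) / (1 + φ ω) * φ ω ^ 2 ∂P) = -(J 2) from rfl,
    show -(∫ ω, (1 - φ ω) / (1 + φ ω) * φ ω ^ 3 ∂P) = -(J 3) from rfl,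
    hJ0]
  field_simp
  ring
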